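/- Let K_1 ⊆ ℝ^n, K_2 ⊆ ℝ^m be proper cones and A an m×n matrix. If A + B is (K_1,K_2)-semipositive for every (K_1,K_2)-semipositive matrix B, then A(K_1) ⊆ K_2. -/

import Mathlib

open Matrix Set

/-- The nonnegative orthant in `ℝ^n`. -/
def posOrth (n : ℕ) : Set (Fin n → ℝ) := {x | ∀ i, 0 ≤ x i}

/-- A proper cone: closed, pointed convex cone with nonempty interior. -/
def IsProperCone {n : ℕ} (K : Set (Fin n → ℝ)) : Prop :=
  (∀ x ∈ K, ∀ y ∈ K, x + y ∈ K) ∧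
  (∀ (c : ℝ), 0 ≤ c → ∀ x ∈ K, c • x ∈ K) ∧
  IsClosed K ∧ K ∩ (-K) = {0} ∧ (interior K).Nonempty

/-- The dual cone of a set in `ℝ^n`. -/
def dualCone {n : ℕ} (K : Set (Fin n → ℝ)) : Set (Fin n → ℝ) :=
  {y | ∀ x ∈ K, 0 ≤ y ⬝ᵥ x}

/-- `(K₁,K₂)`-semipositivity of a matrix. -/
def SemiposCone {n m : ℕ} (K₁ : Set (Fin n → ℝ)) (K₂ : Set (Fin m → ℝ))
    (A : Matrix (Fin m) (Fin n) ℝ) : Prop :=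
  ∃ x ∈ interior K₁, A.mulVec x ∈ interior K₂

/-- Semipositivity with respect to the nonnegative orthants. -/
def Semipos {n m : ℕ} (A : Matrix (Fin m) (Fin n) ℝ) : Prop :=
  ∃ x : Fin n → ℝ, (∀ i, 0 < x i) ∧ ∀ j, 0 < A.mulVec x j

/-- A point of a cone plus a positive multiple of an interior point is interior. -/
lemma aux_shift_mem_interior {k : ℕ} {K : Set (Fin k → ℝ)}
    (hadd : ∀ x ∈ K, ∀ y ∈ K, x + y ∈ K)
    (hsmul : ∀ (c : ℝ), 0 ≤ c → ∀ x ∈ K, c • x ∈ K)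
    {x₀ u : Fin k → ℝ} (hx₀ : x₀ ∈ K) (hu : u ∈ interior K)
    {ε : ℝ} (hε : 0 < ε) : x₀ + ε • u ∈ interior K := by
  have hg : Continuous fun w : Fin k → ℝ => ε⁻¹ • (w - x₀) := by fun_prop
  have hopen : IsOpen ((fun w : Fin k → ℝ => ε⁻¹ • (w - x₀)) ⁻¹' interior K) :=
    isOpen_interior.preimage hg
  have hsub : (fun w : Fin k → ℝ => ε⁻¹ • (w - x₀)) ⁻¹' interior K ⊆ K := by
    intro w hw
    have h1 : ε • (ε⁻¹ • (w - x₀)) ∈ K := hsmul ε hε.le _ (interior_subset hw)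
    rw [smul_smul, mul_inv_cancel₀ hε.ne', one_smul] at h1
    have h2 := hadd _ h1 _ hx₀
    simpa using h2
  have hmem : x₀ + ε • u ∈ (fun w : Fin k → ℝ => ε⁻¹ • (w - x₀)) ⁻¹' interior K := by
    show ε⁻¹ • (x₀ + ε • u - x₀) ∈ interior K
    rw [add_sub_cancel_left, smul_smul, inv_mul_cancel₀ hε.ne', one_smul]
    exact hu
  exact interior_maximal hsub hopen hmem

/-- A nonzero functional which is nonnegative on a set is positive on its interior. -/
lemma aux_pos_on_interior {k : ℕ} {K : Set (Fin k → ℝ)}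
    (f : (Fin k → ℝ) →L[ℝ] ℝ) (hfK : ∀ b ∈ K, 0 ≤ f b)
    {z : Fin k → ℝ} (hz : 0 < f z) {w : Fin k → ℝ} (hw : w ∈ interior K) : 0 < f w := by
  rcases Metric.isOpen_iff.1 isOpen_interior w hw with ⟨ε, hε, hball⟩
  by_contra hle
  push_neg at hle
  have hw0 : f w = 0 := le_antisymm hle (hfK w (interior_subset hw))
  have hz0 : (0:ℝ) < ‖z‖ + 1 := by positivity
  set δ : ℝ := ε / (2 * (‖z‖ + 1)) with hδ
  have hδpos : 0 < δ := by positivity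
  have hmem : w - δ • z ∈ K := by
    apply interior_subset
    apply hball
    rw [Metric.mem_ball, dist_eq_norm]
    have h1 : w - δ • z - w = -(δ • z) := by abel
    rw [h1, norm_neg, norm_smul, Real.norm_eq_abs, abs_of_pos hδpos]
    have h2 : δ * ‖z‖ ≤ δ * (‖z‖ + 1) := by nlinarith [norm_nonneg z]
    have h3 : δ * (‖z‖ + 1) = ε / 2 := by
      rw [hδ]; field_simp
    linarith
  have h4 := hfK _ hmem
  rw [map_sub, f.map_smul, hw0, smul_eq_mul] at h4
  nlinarith

theorem stmt_16 {n m : ℕ} (K₁ : Set (Fin n → ℝ)) (K₂ : Set (Fin m → ℝ))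
    (hK₁ : IsProperCone K₁) (hK₂ : IsProperCone K₂)
    (A : Matrix (Fin m) (Fin n) ℝ)
    (h : ∀ B : Matrix (Fin m) (Fin n) ℝ, SemiposCone K₁ K₂ B →
      SemiposCone K₁ K₂ (A + B)) :
    ∀ x ∈ K₁, A.mulVec x ∈ K₂ := by
  obtain ⟨hadd₁, hsmul₁, _hcl₁, _hpt₁, hint₁⟩ := hK₁
  obtain ⟨hadd₂, hsmul₂, hcl₂, hpt₂, hint₂⟩ := hK₂
  have h0₂ : (0 : Fin m → ℝ) ∈ K₂ := by
    have : (0 : Fin m → ℝ) ∈ K₂ ∩ (-K₂) := by rw [hpt₂]; rfl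
    exact this.1
  intro x₀ hx₀
  by_contra hA
  -- convexity of K₂
  have hconv : Convex ℝ K₂ := by
    intro a ha b hb s t hs ht hst
    exact hadd₂ _ (hsmul₂ s hs a ha) _ (hsmul₂ t ht b hb)
  obtain ⟨f, u, hfx, hfb⟩ := geometric_hahn_banach_point_closed hconv hcl₂ hA
  have hu0 : u < 0 := by simpa using hfb 0 h0₂
  have hfAx₀ : f (A.mulVec x₀) < 0 := hfx.trans hu0
  -- f is nonnegative on K₂
  have hfK : ∀ b ∈ K₂, 0 ≤ f b := by
    intro b hb
    by_contra hlt
    push_neg at hlt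
    have ht : 0 < u / f b := div_pos_of_neg_of_neg hu0 hlt
    have := hfb _ (hsmul₂ (u / f b) ht.le b hb)
    rw [f.map_smul, smul_eq_mul, div_mul_cancel₀ u hlt.ne] at this
    exact lt_irrefl _ this
  have hzpos : 0 < f (-(A.mulVec x₀)) := by rw [map_neg]; linarith
  -- interior point of K₂ and positivity of f there
  obtain ⟨v, hv⟩ := hint₂
  have hfv : 0 < f v := aux_pos_on_interior f hfK hzpos hv
  -- represent f as a dot product
  set y : Fin m → ℝ := fun j => f (fun k => if j = k then 1 else 0) with hy_def
  have hy : ∀ w : Fin m → ℝ, f w = y ⬝ᵥ w := by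
    intro w
    have := LinearMap.pi_apply_eq_sum_univ (f : (Fin m → ℝ) →ₗ[ℝ] ℝ) w
    simp only [ContinuousLinearMap.coe_coe] at this
    rw [this, dotProduct]
    exact Finset.sum_congr rfl fun j _ => by rw [smul_eq_mul, mul_comm]
  -- the perturbation matrix
  set c : Fin n → ℝ := fun i => -(A.vecMul y i) with hc_def
  set B : Matrix (Fin m) (Fin n) ℝ := Matrix.of fun j i => (f v)⁻¹ * (v j * c i) with hB_def
  have hcx : ∀ x : Fin n → ℝ, c ⬝ᵥ x = -(f (A.mulVec x)) := by
    intro x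
    have h1 : c ⬝ᵥ x = -(A.vecMul y ⬝ᵥ x) := by
      simp only [hc_def, dotProduct, neg_mul, Finset.sum_neg_distrib]
    rw [h1, ← Matrix.dotProduct_mulVec, ← hy]
  have hBx : ∀ x : Fin n → ℝ, B.mulVec x = ((f v)⁻¹ * (c ⬝ᵥ x)) • v := by
    intro x
    funext j
    simp only [hB_def, Matrix.mulVec, dotProduct, Matrix.of_apply, Pi.smul_apply,
      smul_eq_mul, Finset.mul_sum]
    rw [Finset.sum_mul]
    exact Finset.sum_congr rfl fun i _ => by ring
  -- B is semipositive: witness x₀ + ε • u₁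
  obtain ⟨u₁, hu₁⟩ := hint₁
  set p : ℝ := f (A.mulVec x₀) with hp_def
  set r : ℝ := f (A.mulVec u₁) with hr_def
  have hrpos : (0:ℝ) < |r| + 1 := by positivity
  set ε : ℝ := (-p) / (2 * (|r| + 1)) with hε_def
  have hεpos : 0 < ε := by
    apply div_pos (by linarith) (by positivity)
  have hxε_int : x₀ + ε • u₁ ∈ interior K₁ :=
    aux_shift_mem_interior hadd₁ hsmul₁ hx₀ hu₁ hεpos
  have hfxε : f (A.mulVec (x₀ + ε • u₁)) < 0 := by
    rw [Matrix.mulVec_add, Matrix.mulVec_smul, map_add, f.map_smul, smul_eq_mul,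
      ← hp_def, ← hr_def]
    have h2 : ε * r ≤ ε * |r| := by
      have := le_abs_self r
      nlinarith
    have h3 : ε * (|r| + 1) = -p / 2 := by rw [hε_def]; field_simp
    nlinarith
  have hBsemi : SemiposCone K₁ K₂ B := by
    refine ⟨x₀ + ε • u₁, hxε_int, ?_⟩
    rw [hBx, hcx]
    have hcoef : 0 < (f v)⁻¹ * -f (A.mulVec (x₀ + ε • u₁)) := by
      apply mul_pos (inv_pos.2 hfv) (by linarith)
    have := aux_shift_mem_interior hadd₂ hsmul₂ h0₂ hv hcoef
    simpa using this
  -- apply hypothesis and derive contradiction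
  obtain ⟨z, _hz, hAz⟩ := h B hBsemi
  have hfAz : f ((A + B).mulVec z) = 0 := by
    rw [Matrix.add_mulVec, map_add, hBx, hcx, f.map_smul, smul_eq_mul]
    field_simp
    ring
  have hpos : 0 < f ((A + B).mulVec z) := aux_pos_on_interior f hfK hzpos hAz
  rw [hfAz] at hpos
  exact lt_irrefl _ hpos
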